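/- arXiv:2203.14796 — 3 statements merged into one kernel-verified Lean document; each statement's English description precedes it below -/
import Mathlib

section
/- For every k ∈ ℕ, every n ≥ 1, all m_1,…,m_n ∈ ℚ and every permutation σ of {1,…,n}: p_k(m_{σ(1)},…,m_{σ(n)}) = p_k(m_1,…,m_n) and q_k(m_{σ(1)},…,m_{σ(n)}) = q_k(m_1,…,m_n), i.e. the multivariate polynomials p_k and q_k are symmetric in their variables. Moreover they satisfy the consistency relations p_k(m_1,…,m_n,0) = p_k(m_1,…,m_n) and q_k(m_1,…,m_n,0) = q_k(m_1,…,m_n). -/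
/-- Generalized binomial coefficient `binom(x,k) = x(x-1)⋯(x-k+1)/k!`. -/
def qbinom (x : ℚ) (k : ℕ) : ℚ := (∏ i ∈ Finset.range k, (x - i)) / (Nat.factorial k)

/-- `p_k(m) = binom(m-1,k)·binom(m+k,k)`. -/
def pPoly (k : ℕ) (m : ℚ) : ℚ := qbinom (m - 1) k * qbinom (m + k) k

/-- `q_k(m) = binom(m,k)·binom(m+k-1,k)`. -/
def qPoly (k : ℕ) (m : ℚ) : ℚ := qbinom m k * qbinom (m + k - 1) k

/-- Multivariate `p_k(m_1,…,m_n) = Σ_{k_1+⋯+k_n=k} p_{k_1}(m_1)·q_{k_2}(m_2)⋯q_{k_n}(m_n)`. -/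
def pMulti (k n : ℕ) (m : Fin n → ℚ) : ℚ :=
  ∑ f ∈ Finset.Nat.antidiagonalTuple n k,
    ∏ i : Fin n, (if i.val = 0 then pPoly (f i) (m i) else qPoly (f i) (m i))

/-- Multivariate `q_k(m_1,…,m_n) = Σ_{k_1+⋯+k_n=k} q_{k_1}(m_1)⋯q_{k_n}(m_n)`. -/
def qMulti (k n : ℕ) (m : Fin n → ℚ) : ℚ :=
  ∑ f ∈ Finset.Nat.antidiagonalTuple n k, ∏ i : Fin n, qPoly (f i) (m i)

lemma qbinom_zero (x : ℚ) : qbinom x 0 = 1 := by simp [qbinom]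

lemma pPoly_zero (m : ℚ) : pPoly 0 m = 1 := by simp [pPoly, qbinom_zero]

lemma qPoly_zero (m : ℚ) : qPoly 0 m = 1 := by simp [qPoly, qbinom_zero]

lemma qPoly_succ_zero (k : ℕ) : qPoly (k + 1) 0 = 0 := by
  have : qbinom 0 (k + 1) = 0 := by
    simp only [qbinom]
    rw [Finset.prod_eq_zero (Finset.mem_range.2 (Nat.succ_pos k))]
    · simp
    · simp
  simp [qPoly, this]

lemma pPoly_succ (k : ℕ) (m : ℚ) : pPoly (k + 1) m = qPoly (k + 1) m - pPoly k m := by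
  have hA : ∏ i ∈ Finset.range (k + 1), (m - 1 - i) =
      (∏ i ∈ Finset.range k, (m - 1 - i)) * (m - 1 - k) := by
    rw [Finset.prod_range_succ]
  have hB : ∏ i ∈ Finset.range (k + 1), (m + (k + 1) - i) =
      (∏ i ∈ Finset.range k, (m + k - i)) * (m + (k + 1)) := by
    rw [Finset.prod_range_succ']
    congr 1
    · apply Finset.prod_congr rfl
      intro i _
      push_cast; ring
    · push_cast; ring
  have hC : ∏ i ∈ Finset.range (k + 1), (m - i) =
      (∏ i ∈ Finset.range k, (m - 1 - i)) * m := by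
    rw [Finset.prod_range_succ']
    congr 1
    · apply Finset.prod_congr rfl
      intro i _
      push_cast; ring
    · simp
  have hD : ∏ i ∈ Finset.range (k + 1), (m + (k + 1) - 1 - i) =
      (∏ i ∈ Finset.range k, (m + k - i)) * m := by
    rw [Finset.prod_range_succ]
    congr 1
    · apply Finset.prod_congr rfl
      intro i _
      ring
    · ring
  have hf0 : (k.factorial : ℚ) ≠ 0 := Nat.cast_ne_zero.2 (Nat.factorial_ne_zero k)
  have hk1 : ((k : ℚ) + 1) ≠ 0 := by positivity
  simp only [pPoly, qPoly, qbinom]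
  push_cast [Nat.factorial_succ] at *
  rw [hA, hB, hC, hD]
  field_simp
  ring

lemma cons_decomp (n k : ℕ) (F : Fin (n+1) → ℕ → ℚ) :
    ∑ f ∈ Finset.Nat.antidiagonalTuple (n+1) k, ∏ i, F i (f i)
    = ∑ ab ∈ Finset.HasAntidiagonal.antidiagonal k,
        F 0 ab.1 * ∑ g ∈ Finset.Nat.antidiagonalTuple n ab.2, ∏ i, F i.succ (g i) := by
  simp only [Finset.mul_sum]
  rw [Finset.sum_sigma']
  refine Finset.sum_nbij' (fun f => ⟨(f 0, ∑ i, f (Fin.succ i)), f ∘ Fin.succ⟩)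
    (fun x => Fin.cons x.1.1 x.2) ?_ ?_ ?_ ?_ ?_
  · intro f hf
    rw [Finset.Nat.mem_antidiagonalTuple] at hf
    refine Finset.mem_sigma.2 ⟨?_, ?_⟩
    · rw [Finset.HasAntidiagonal.mem_antidiagonal]
      rw [← hf, Fin.sum_univ_succ]
    · rw [Finset.Nat.mem_antidiagonalTuple]
      rfl
  · intro x hx
    rw [Finset.mem_sigma] at hx
    obtain ⟨h1, h2⟩ := hx
    rw [Finset.HasAntidiagonal.mem_antidiagonal] at h1
    rw [Finset.Nat.mem_antidiagonalTuple] at h2 ⊢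
    rw [Fin.sum_univ_succ]
    simp [h2, h1]
  · intro f hf
    exact Fin.cons_self_tail f
  · rintro ⟨⟨a, b⟩, g⟩ hx
    rw [Finset.mem_sigma] at hx
    obtain ⟨h1, h2⟩ := hx
    rw [Finset.Nat.mem_antidiagonalTuple] at h2
    have hcs : (Fin.cons a g : Fin (n+1) → ℕ) ∘ Fin.succ = g := by
      ext i; simp
    simp only [Fin.cons_zero, hcs]
    simp [h2]
  · intro f hf
    rw [Fin.prod_univ_succ]
    rfl

lemma snoc_decomp (n k : ℕ) (F : Fin (n+1) → ℕ → ℚ) :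
    ∑ f ∈ Finset.Nat.antidiagonalTuple (n+1) k, ∏ i, F i (f i)
    = ∑ ab ∈ Finset.HasAntidiagonal.antidiagonal k,
        (∑ g ∈ Finset.Nat.antidiagonalTuple n ab.1, ∏ i, F i.castSucc (g i))
          * F (Fin.last n) ab.2 := by
  simp only [Finset.sum_mul]
  rw [Finset.sum_sigma']
  refine Finset.sum_nbij' (fun f => ⟨(∑ i, f (Fin.castSucc i), f (Fin.last n)), f ∘ Fin.castSucc⟩)
    (fun x => Fin.snoc x.2 x.1.2) ?_ ?_ ?_ ?_ ?_
  · intro f hf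
    rw [Finset.Nat.mem_antidiagonalTuple] at hf
    refine Finset.mem_sigma.2 ⟨?_, ?_⟩
    · rw [Finset.HasAntidiagonal.mem_antidiagonal]
      rw [← hf, Fin.sum_univ_castSucc]
    · rw [Finset.Nat.mem_antidiagonalTuple]
      rfl
  · intro x hx
    rw [Finset.mem_sigma] at hx
    obtain ⟨h1, h2⟩ := hx
    rw [Finset.HasAntidiagonal.mem_antidiagonal] at h1
    rw [Finset.Nat.mem_antidiagonalTuple] at h2 ⊢
    rw [Fin.sum_univ_castSucc]
    simp [h2, h1]
  · intro f hf
    exact Fin.snoc_init_self f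
  · rintro ⟨⟨a, b⟩, g⟩ hx
    rw [Finset.mem_sigma] at hx
    obtain ⟨h1, h2⟩ := hx
    rw [Finset.Nat.mem_antidiagonalTuple] at h2
    have hcs : (Fin.snoc g b : Fin (n+1) → ℕ) ∘ Fin.castSucc = g := by
      ext i; simp
    simp only [Fin.snoc_last, hcs]
    simp [h2]
  · intro f hf
    rw [Fin.prod_univ_castSucc]
    rfl

lemma pMulti_cons (k n : ℕ) (m : Fin (n+1) → ℚ) :
    pMulti k (n+1) m
      = ∑ ab ∈ Finset.HasAntidiagonal.antidiagonal k,
          pPoly ab.1 (m 0) * qMulti ab.2 n (m ∘ Fin.succ) := by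
  refine (cons_decomp n k
      (fun i j => if i.val = 0 then pPoly j (m i) else qPoly j (m i))).trans ?_
  refine Finset.sum_congr rfl fun ab _ => ?_
  have h0 : (if (0 : Fin (n+1)).val = 0 then pPoly ab.1 (m 0) else qPoly ab.1 (m 0))
      = pPoly ab.1 (m 0) := by simp
  have hs : ∀ g : Fin n → ℕ,
      (∏ i : Fin n, if (Fin.succ i).val = 0 then pPoly (g i) (m (Fin.succ i))
        else qPoly (g i) (m (Fin.succ i)))
      = ∏ i : Fin n, qPoly (g i) (m (Fin.succ i)) :=
    fun g => Finset.prod_congr rfl fun i _ => by simp [Fin.val_succ]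
  rw [h0, Finset.sum_congr rfl fun g _ => hs g]
  rfl

lemma qMulti_cons (k n : ℕ) (m : Fin (n+1) → ℚ) :
    qMulti k (n+1) m
      = ∑ ab ∈ Finset.HasAntidiagonal.antidiagonal k,
          qPoly ab.1 (m 0) * qMulti ab.2 n (m ∘ Fin.succ) := by
  exact (cons_decomp n k (fun i j => qPoly j (m i))).trans rfl

lemma pair_rec (k : ℕ) (x : ℚ) (Q : ℕ → ℚ) :
    ∑ ab ∈ Finset.HasAntidiagonal.antidiagonal (k+1), pPoly ab.1 x * Q ab.2
    = ∑ ab ∈ Finset.HasAntidiagonal.antidiagonal (k+1), qPoly ab.1 x * Q ab.2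
      - ∑ ab ∈ Finset.HasAntidiagonal.antidiagonal k, pPoly ab.1 x * Q ab.2 := by
  simp only [Finset.Nat.antidiagonal_succ, Finset.sum_cons, Finset.sum_map,
    Function.Embedding.coe_prodMap, Prod.map_fst, Prod.map_snd, Function.Embedding.coeFn_mk,
    Function.Embedding.refl_apply, pPoly_zero, qPoly_zero, pPoly_succ]
  rw [Finset.sum_congr rfl (fun ab _ => sub_mul (qPoly (ab.1 + 1) x) (pPoly ab.1 x) (Q ab.2)),
    Finset.sum_sub_distrib]
  ring

lemma pMulti_rec (k n : ℕ) (m : Fin (n+1) → ℚ) :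
    pMulti (k+1) (n+1) m = qMulti (k+1) (n+1) m - pMulti k (n+1) m := by
  rw [pMulti_cons, pMulti_cons, qMulti_cons]
  exact pair_rec k (m 0) fun b => qMulti b n (m ∘ Fin.succ)

lemma pMulti_zero' (n : ℕ) (m : Fin n → ℚ) : pMulti 0 n m = 1 := by
  rw [pMulti, Finset.Nat.antidiagonalTuple_zero_right, Finset.sum_singleton]
  refine Finset.prod_eq_one fun i _ => ?_
  split <;> simp [pPoly_zero, qPoly_zero]

lemma qMulti_zero' (n : ℕ) (m : Fin n → ℚ) : qMulti 0 n m = 1 := by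
  rw [qMulti, Finset.Nat.antidiagonalTuple_zero_right, Finset.sum_singleton]
  exact Finset.prod_eq_one fun i _ => qPoly_zero _

lemma qMulti_perm (k n : ℕ) (m : Fin n → ℚ) (σ : Equiv.Perm (Fin n)) :
    qMulti k n (m ∘ σ) = qMulti k n m := by
  rw [qMulti, qMulti]
  refine Finset.sum_nbij' (fun f => f ∘ σ.symm) (fun f => f ∘ σ) ?_ ?_ ?_ ?_ ?_
  · intro f hf
    rw [Finset.Nat.mem_antidiagonalTuple] at hf ⊢
    rw [← hf]
    exact Equiv.sum_comp σ.symm f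
  · intro f hf
    rw [Finset.Nat.mem_antidiagonalTuple] at hf ⊢
    rw [← hf]
    exact Equiv.sum_comp σ f
  · intro f _
    ext i; simp
  · intro f _
    ext i; simp
  · intro f _
    exact Fintype.prod_equiv σ _ _ fun i => by simp

lemma pMulti_perm (k n : ℕ) (m : Fin (n+1) → ℚ) (σ : Equiv.Perm (Fin (n+1))) :
    pMulti k (n+1) (m ∘ σ) = pMulti k (n+1) m := by
  induction k with
  | zero => rw [pMulti_zero', pMulti_zero']
  | succ k ih => rw [pMulti_rec, pMulti_rec, ih, qMulti_perm]

set_option maxHeartbeats 1000000 in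
lemma qMulti_snoc (k n : ℕ) (m : Fin n → ℚ) :
    qMulti k (n+1) (Fin.snoc m 0) = qMulti k n m := by
  refine (snoc_decomp n k (fun i j => qPoly j ((Fin.snoc m 0 : Fin (n+1) → ℚ) i))).trans ?_
  have hstep : ∀ ab ∈ Finset.HasAntidiagonal.antidiagonal k,
      (∑ g ∈ Finset.Nat.antidiagonalTuple n ab.1,
        ∏ i : Fin n, qPoly (g i) ((Fin.snoc m 0 : Fin (n+1) → ℚ) (Fin.castSucc i)))
          * qPoly ab.2 ((Fin.snoc m 0 : Fin (n+1) → ℚ) (Fin.last n))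
      = qMulti ab.1 n m * qPoly ab.2 0 := by
    intro ab _
    rw [Fin.snoc_last]
    congr 1
    rw [qMulti]
    exact Finset.sum_congr rfl fun g _ => Finset.prod_congr rfl fun i _ => by
      rw [Fin.snoc_castSucc]
  rw [Finset.sum_congr rfl hstep,
    Finset.sum_eq_single_of_mem (k, 0) (by simp)
      (f := fun ab => qMulti ab.1 n m * qPoly ab.2 0)]
  · simp [qPoly_zero]
  · rintro ⟨a, b⟩ hab hne
    rw [Finset.HasAntidiagonal.mem_antidiagonal] at hab
    obtain _ | b := b
    · exact absurd (by omega : a = k) (by simpa using hne)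
    · simp [qPoly_succ_zero]

lemma pMulti_snoc (k n : ℕ) (m : Fin (n+1) → ℚ) :
    pMulti k (n+2) (Fin.snoc m 0) = pMulti k (n+1) m := by
  induction k with
  | zero => rw [pMulti_zero', pMulti_zero']
  | succ k ih => rw [pMulti_rec, pMulti_rec, ih, qMulti_snoc]

/-- Symmetry of the multivariate polynomials `p_k` and `q_k` under permutations of their
variables, together with the consistency relations obtained by appending the value `0`. -/
theorem stmt2 (k n : ℕ) (hn : 1 ≤ n) (m : Fin n → ℚ) :
    (∀ σ : Equiv.Perm (Fin n),
      pMulti k n (m ∘ σ) = pMulti k n m ∧ qMulti k n (m ∘ σ) = qMulti k n m) ∧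
    pMulti k (n + 1) (Fin.snoc m 0) = pMulti k n m ∧
    qMulti k (n + 1) (Fin.snoc m 0) = qMulti k n m := by
  obtain ⟨n', rfl⟩ : ∃ n', n = n' + 1 := ⟨n - 1, (Nat.succ_pred_eq_of_pos hn).symm⟩
  exact ⟨fun σ => ⟨pMulti_perm k n' m σ, qMulti_perm k (n'+1) m σ⟩,
    pMulti_snoc k n' m, qMulti_snoc k (n'+1) m⟩
end

section
/- (Lemma 3.1, hypergeometric identities.) For all integers ℓ ≥ 1 and k ≥ 0: Σ_{m=1}^{ℓ} (m/ℓ)·C(2ℓ, ℓ−m)·p_k(m) = C(ℓ−1,k)·C(2ℓ−1,ℓ) and Σ_{m=1}^{ℓ} (m/ℓ)·C(2ℓ, ℓ−m)·q_k(m) = C(ℓ,k)·C(2ℓ−1,ℓ), where all C(·,·) are ordinary binomial coefficients; equivalently, Σ_{m=0}^{ℓ} A_{ℓ,m}·p_k(m) = C(ℓ−1,k)·C(2ℓ−1,ℓ) and Σ_{m=0}^{ℓ} A_{ℓ,m}·q_k(m) = C(ℓ,k)·C(2ℓ−1,ℓ) with A_{ℓ,m} := (2m/2ℓ)·C(2ℓ,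 ℓ−m). -/
lemma qbinom_succ_left (x : ℚ) (k : ℕ) :
    qbinom x (k+1) = qbinom (x-1) k * x / (k+1) := by
  rw [qbinom, qbinom, Finset.prod_range_succ']
  have hp : (∏ i ∈ Finset.range k, (x - ((i:ℕ)+1 : ℕ))) = ∏ i ∈ Finset.range k, (x - 1 - (i:ℕ)) :=
    Finset.prod_congr rfl (fun i _ => by push_cast; ring)
  rw [hp, Nat.factorial_succ]
  have h1 : (k.factorial : ℚ) ≠ 0 := by positivity
  push_cast
  field_simp
  ring

lemma qbinom_succ_right (x : ℚ) (k : ℕ) :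
    qbinom x (k+1) = qbinom x k * (x - k) / (k+1) := by
  rw [qbinom, qbinom, Finset.prod_range_succ, Nat.factorial_succ]
  have h1 : (k.factorial : ℚ) ≠ 0 := by positivity
  push_cast
  field_simp

lemma qbinom_nat_zero {m k : ℕ} (h : m < k) : qbinom (m:ℚ) k = 0 := by
  rw [qbinom, Finset.prod_eq_zero (Finset.mem_range.mpr h) (by simp)]
  simp

/-- the two-parameter family appearing in the descent -/
def Qf (s j : ℕ) (x : ℚ) : ℚ := qbinom (x - s) j * qbinom (x + j - 1) j

lemma master (s j : ℕ) (x : ℚ) :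
    Qf s (j+1) x - Qf s (j+1) (x-1)
      = ((2*x - s - 1)/(j+1)) * Qf (s+1) j x := by
  have hj : ((j:ℚ)+1) ≠ 0 := by positivity
  have h1 : qbinom (x - (s:ℚ)) (j+1) = qbinom (x - (s:ℚ) - 1) j * (x - (s:ℚ)) / ((j:ℚ)+1) :=
    qbinom_succ_left _ _
  have h2 : qbinom (x + ((j:ℕ)+1 : ℕ) - 1) (j+1)
      = qbinom (x + (j:ℚ) - 1) j * (x + (j:ℚ) - 1 + 1) / ((j:ℚ)+1) := by
    rw [show x + (((j:ℕ)+1 : ℕ):ℚ) - 1 = (x + (j:ℚ) - 1) + 1 by push_cast; ring,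
        qbinom_succ_left (x + (j:ℚ) - 1 + 1) j,
        show x + (j:ℚ) - 1 + 1 - 1 = x + (j:ℚ) - 1 by ring]
  have h3 : qbinom (x - 1 - (s:ℚ)) (j+1)
      = qbinom (x - (s:ℚ) - 1) j * (x - (s:ℚ) - 1 - (j:ℚ)) / ((j:ℚ)+1) := by
    rw [show x - 1 - (s:ℚ) = x - (s:ℚ) - 1 by ring, qbinom_succ_right (x - (s:ℚ) - 1) j]
  have h4 : qbinom (x - 1 + ((j:ℕ)+1 : ℕ) - 1) (j+1)
      = qbinom (x + (j:ℚ) - 1) j * (x + (j:ℚ) - 1 - (j:ℚ)) / ((j:ℚ)+1) := by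
    rw [show x - 1 + (((j:ℕ)+1 : ℕ):ℚ) - 1 = x + (j:ℚ) - 1 by push_cast; ring,
        qbinom_succ_right (x + (j:ℚ) - 1) j]
  have h5 : qbinom (x - ((s:ℕ)+1 : ℕ)) j = qbinom (x - (s:ℚ) - 1) j := by
    rw [show x - (((s:ℕ)+1 : ℕ):ℚ) = x - (s:ℚ) - 1 by push_cast; ring]
  rw [Qf, Qf, Qf, h1, h2, h3, h4, h5]
  field_simp
  ring

lemma pq_rel (k : ℕ) (m : ℚ) : qPoly (k+1) m = pPoly (k+1) m + pPoly k m := by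
  have hj : ((k:ℚ)+1) ≠ 0 := by positivity
  have g1 : qbinom m (k+1) = qbinom (m-1) k * m / ((k:ℚ)+1) := qbinom_succ_left m k
  have g2 : qbinom (m + ((k:ℕ)+1 : ℕ) - 1) (k+1)
      = qbinom (m + (k:ℚ)) k * (m + (k:ℚ) - (k:ℚ)) / ((k:ℚ)+1) := by
    rw [show m + (((k:ℕ)+1 : ℕ):ℚ) - 1 = m + (k:ℚ) by push_cast; ring,
        qbinom_succ_right (m + (k:ℚ)) k]
  have g3 : qbinom (m-1) (k+1) = qbinom (m-1) k * (m - 1 - (k:ℚ)) / ((k:ℚ)+1) :=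
    qbinom_succ_right (m-1) k
  have g4 : qbinom (m + ((k:ℕ)+1 : ℕ)) (k+1)
      = qbinom (m + (k:ℚ)) k * (m + (((k:ℕ)+1 : ℕ):ℚ)) / ((k:ℚ)+1) := by
    rw [qbinom_succ_left (m + (((k:ℕ)+1 : ℕ):ℚ)) k,
        show m + (((k:ℕ)+1 : ℕ):ℚ) - 1 = m + (k:ℚ) by push_cast; ring]
  rw [qPoly, pPoly, pPoly, g1, g2, g3, g4]
  push_cast
  field_simp
  ring

lemma abel_core (ℓ : ℕ) (B G : ℕ → ℚ) :
    ∑ i ∈ Finset.range ℓ, (B (i+1) - B (i+2)) * G (i+1)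
      = (∑ i ∈ Finset.range ℓ, B (i+1) * (G (i+1) - G i)) + B 1 * G 0 - B (ℓ+1) * G ℓ := by
  induction ℓ with
  | zero => simp
  | succ n ih =>
      rw [Finset.sum_range_succ, Finset.sum_range_succ, ih]
      ring

lemma abel (ℓ n : ℕ) (hl : 1 ≤ ℓ) (hn : ℓ ≤ n) (f : ℕ → ℚ) :
    ∑ m ∈ Finset.Icc 1 ℓ, (2*(m:ℚ) - (2*(ℓ:ℚ) - (n:ℚ))) * (Nat.choose n (ℓ-m) : ℚ) * f m
      = (n:ℚ) * ((∑ m ∈ Finset.Icc 1 ℓ, (Nat.choose (n-1) (ℓ-m) : ℚ) * (f m - f (m-1)))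
          + (Nat.choose (n-1) (ℓ-1) : ℚ) * f 0) := by
  set B : ℕ → ℚ := fun i => if i ≤ ℓ then (Nat.choose (n-1) (ℓ-i) : ℚ) else 0 with hB
  have key : ∀ m, 1 ≤ m → m ≤ ℓ →
      (2*(m:ℚ) - (2*(ℓ:ℚ) - (n:ℚ))) * (Nat.choose n (ℓ-m) : ℚ) = (n:ℚ) * (B m - B (m+1)) := by
    intro m h1 h2
    rcases eq_or_lt_of_le h2 with h|h
    · have b1 : B m = 1 := by
        simp only [hB]; rw [if_pos h2, show ℓ - m = 0 by omega]; simp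
      have b2 : B (m+1) = 0 := by simp only [hB]; rw [if_neg (by omega)]
      rw [b1, b2, show ℓ - m = 0 by omega, Nat.choose_zero_right]
      have hmq : (m:ℚ) = ℓ := by exact_mod_cast congrArg (Nat.cast : ℕ → ℚ) h
      rw [hmq]; push_cast; ring
    · have hm1 : m + 1 ≤ ℓ := h
      simp only [hB, h2, hm1, if_pos]
      set r := ℓ - m with hr
      have hr1 : 1 ≤ r := by omega
      have hrn : r ≤ n - 1 := by omega
      have e1 : (n - 1).choose r * n = n.choose r * (n - r) := by
        have := Nat.choose_mul_succ_eq (n-1) r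
        have hn1 : n - 1 + 1 = n := by omega
        rw [hn1] at this
        omega
      have e2 : n * (n-1).choose (r-1) = n.choose r * r := by
        have := Nat.add_one_mul_choose_eq (n-1) (r-1)
        have hn1 : n - 1 + 1 = n := by omega
        have hr1' : r - 1 + 1 = r := by omega
        rw [hn1, hr1'] at this
        omega
      have hmr : ℓ - (m+1) = r - 1 := by omega
      rw [hmr]
      have c1 : ((n - 1).choose r : ℚ) * n = n.choose r * ((n:ℚ) - r) := by
        have := congrArg (Nat.cast : ℕ → ℚ) e1
        push_cast [Nat.cast_sub (by omega : r ≤ n)] at this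
        linarith [this]
      have c2 : (n:ℚ) * (n-1).choose (r-1) = n.choose r * r := by
        exact_mod_cast congrArg (Nat.cast : ℕ → ℚ) e2
      have hrq : (r:ℚ) = (ℓ:ℚ) - m := by
        rw [hr, Nat.cast_sub h2]
      nlinarith [c1, c2, hrq]
  simp only [← Finset.Ico_add_one_right_eq_Icc, Finset.sum_Ico_eq_sum_range, Nat.add_sub_cancel]
  have hG : ∀ i, (2*((1+i:ℕ):ℚ) - (2*(ℓ:ℚ) - (n:ℚ))) * (Nat.choose n (ℓ-(1+i)) : ℚ) * f (1+i)
      = ((n:ℚ) * (B (i+1) - B (i+2))) * f (1+i) ∨ ¬ (i < ℓ) := by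
    intro i
    by_cases hi : i < ℓ
    · left
      have := key (1+i) (by omega) (by omega)
      rw [show i + 1 = 1 + i by ring, show i + 2 = 1 + i + 1 by ring]
      rw [this]
    · right; exact hi
  have step1 : ∑ i ∈ Finset.range ℓ, (2*((1+i:ℕ):ℚ) - (2*(ℓ:ℚ) - (n:ℚ))) * (Nat.choose n (ℓ-(1+i)) : ℚ) * f (1+i)
      = ∑ i ∈ Finset.range ℓ, ((n:ℚ) * (B (i+1) - B (i+2))) * f (1+i) := by
    apply Finset.sum_congr rfl
    intro i hi
    rcases hG i with h | h
    · exact h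
    · exact absurd (Finset.mem_range.mp hi) h
  rw [step1]
  have step2 : ∑ i ∈ Finset.range ℓ, ((n:ℚ) * (B (i+1) - B (i+2))) * f (1+i)
      = (n:ℚ) * ∑ i ∈ Finset.range ℓ, (B (i+1) - B (i+2)) * f (i+1) := by
    rw [Finset.mul_sum]
    apply Finset.sum_congr rfl
    intro i _
    rw [show 1 + i = i + 1 by ring]
    ring
  rw [step2, abel_core ℓ B (fun i => f i)]
  have hB1 : B 1 = (Nat.choose (n-1) (ℓ-1) : ℚ) := by simp only [hB]; rw [if_pos hl]
  have hBl : B (ℓ+1) = 0 := by simp only [hB]; rw [if_neg (by omega)]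
  rw [hB1, hBl]
  have step3 : ∑ i ∈ Finset.range ℓ, B (i+1) * (f (i+1) - f i)
      = ∑ i ∈ Finset.range ℓ, (Nat.choose (n-1) (ℓ-(1+i)) : ℚ) * (f (1+i) - f (1+i-1)) := by
    apply Finset.sum_congr rfl
    intro i hi
    have hi' : i < ℓ := Finset.mem_range.mp hi
    have : B (i+1) = (Nat.choose (n-1) (ℓ-(1+i)) : ℚ) := by
      simp only [hB]; rw [if_pos (by omega), show ℓ - (i+1) = ℓ - (1+i) by omega]
    rw [this, show 1 + i - 1 = i by omega, show 1 + i = i + 1 by ring]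
  rw [step3]
  ring

lemma lemA : ∀ (j s ℓ : ℕ), 1 ≤ ℓ → s + j ≤ ℓ →
    ∑ m ∈ Finset.Icc 1 ℓ, (2*(m:ℚ) - (s:ℚ)) * (Nat.choose (2*ℓ-s) (ℓ-m) : ℚ) * Qf s j (m:ℚ)
      = (Nat.choose (2*ℓ-s) j : ℚ) * ((2*ℓ-s-j : ℕ) : ℚ) * (Nat.choose (2*ℓ-s-j-1) (ℓ-1) : ℚ) := by
  intro j
  induction j with
  | zero =>
      intro s ℓ hl hs
      have hcast : ((2*ℓ - s:ℕ):ℚ) = 2*(ℓ:ℚ) - s := by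
        push_cast [Nat.cast_sub (by omega : s ≤ 2*ℓ)]; ring
      have hab := abel ℓ (2*ℓ-s) hl (by omega) (fun _ => 1)
      simp only [sub_self, mul_zero, Finset.sum_const_zero, zero_add, mul_one] at hab
      have hw : ∀ m : ℕ, (2*(m:ℚ) - (s:ℚ)) = (2*(m:ℚ) - (2*(ℓ:ℚ) - ((2*ℓ-s:ℕ):ℚ))) := by
        intro m; rw [hcast]; ring
      calc ∑ m ∈ Finset.Icc 1 ℓ, (2*(m:ℚ) - (s:ℚ)) * (Nat.choose (2*ℓ-s) (ℓ-m) : ℚ) * Qf s 0 (m:ℚ)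
          = ∑ m ∈ Finset.Icc 1 ℓ,
              (2*(m:ℚ) - (2*(ℓ:ℚ) - ((2*ℓ-s:ℕ):ℚ))) * (Nat.choose (2*ℓ-s) (ℓ-m) : ℚ) := by
            apply Finset.sum_congr rfl; intro m _
            rw [Qf, qbinom_zero, qbinom_zero, mul_one, mul_one, hw m]
        _ = ((2*ℓ-s:ℕ):ℚ) * (Nat.choose (2*ℓ-s-1) (ℓ-1) : ℚ) := hab
        _ = (Nat.choose (2*ℓ-s) 0 : ℚ) * ((2*ℓ-s-0 : ℕ) : ℚ) * (Nat.choose (2*ℓ-s-0-1) (ℓ-1) : ℚ) := by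
            simp
  | succ j ih =>
      intro s ℓ hl hs
      have hcast : ((2*ℓ - s:ℕ):ℚ) = 2*(ℓ:ℚ) - s := by
        push_cast [Nat.cast_sub (by omega : s ≤ 2*ℓ)]; ring
      have hj : ((j:ℚ)+1) ≠ 0 := by positivity
      have hab := abel ℓ (2*ℓ-s) hl (by omega) (fun m : ℕ => Qf s (j+1) (m:ℚ))
      have hb : Qf s (j+1) ((0:ℕ):ℚ) = 0 := by
        rw [Qf, show ((0:ℕ):ℚ) + ((j:ℕ)+1:ℕ) - 1 = ((j:ℕ):ℚ) by push_cast; ring,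
           qbinom_nat_zero (Nat.lt_succ_self j), mul_zero]
      rw [hb, mul_zero, add_zero] at hab
      have hdiff : ∑ m ∈ Finset.Icc 1 ℓ, (Nat.choose (2*ℓ-s-1) (ℓ-m) : ℚ)
            * (Qf s (j+1) (m:ℚ) - Qf s (j+1) (((m-1:ℕ)):ℚ))
          = (1/((j:ℚ)+1)) * ∑ m ∈ Finset.Icc 1 ℓ,
              (2*(m:ℚ) - ((s+1:ℕ):ℚ)) * (Nat.choose (2*ℓ-(s+1)) (ℓ-m) : ℚ) * Qf (s+1) j (m:ℚ) := by
        rw [Finset.mul_sum]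
        apply Finset.sum_congr rfl
        intro m hm
        have h1m : 1 ≤ m := (Finset.mem_Icc.mp hm).1
        have hc : ((m-1:ℕ):ℚ) = (m:ℚ) - 1 := by
          push_cast [Nat.cast_sub h1m]; ring
        rw [hc, master s j (m:ℚ), show 2*ℓ-s-1 = 2*ℓ-(s+1) by omega]
        push_cast
        field_simp
        ring
      rw [hdiff, ih (s+1) ℓ hl (by omega)] at hab
      have hgoal : ∑ m ∈ Finset.Icc 1 ℓ, (2*(m:ℚ) - (s:ℚ)) * (Nat.choose (2*ℓ-s) (ℓ-m) : ℚ) * Qf s (j+1) (m:ℚ)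
          = ((2*ℓ-s:ℕ):ℚ) * ((1/((j:ℚ)+1)) * ((Nat.choose (2*ℓ-(s+1)) j : ℚ)
              * ((2*ℓ-(s+1)-j : ℕ) : ℚ) * (Nat.choose (2*ℓ-(s+1)-j-1) (ℓ-1) : ℚ))) := by
        rw [← hab]
        apply Finset.sum_congr rfl
        intro m _
        rw [hcast]
        ring_nf
      rw [hgoal]
      have hnat : (2*ℓ-s) * Nat.choose (2*ℓ-s-1) j = (j+1) * Nat.choose (2*ℓ-s) (j+1) := by
        have h := Nat.add_one_mul_choose_eq (2*ℓ-s-1) j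
        have h2 : (2*ℓ-s-1) + 1 = 2*ℓ-s := by omega
        simp only [Nat.succ_eq_add_one, h2] at h
        rw [h, Nat.mul_comm]
      have hq : ((2*ℓ-s:ℕ):ℚ) * (Nat.choose (2*ℓ-(s+1)) j : ℚ)
          = ((j:ℚ)+1) * (Nat.choose (2*ℓ-s) (j+1) : ℚ) := by
        rw [show 2*ℓ-(s+1) = 2*ℓ-s-1 by omega]
        exact_mod_cast congrArg (Nat.cast : ℕ → ℚ) hnat
      rw [show 2*ℓ-(s+1)-j = 2*ℓ-s-(j+1) by omega]
      field_simp
      linear_combination (((2*ℓ-s-(j+1) : ℕ)):ℚ) * (((Nat.choose (2*ℓ-s-(j+1)-1) (ℓ-1)) : ℕ):ℚ) * hq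

lemma hN (ℓ k : ℕ) (hl : 1 ≤ ℓ) (hk : k ≤ ℓ) :
    (Nat.choose (2*ℓ) k : ℚ) * ((2*ℓ-k : ℕ) : ℚ) * (Nat.choose (2*ℓ-k-1) (ℓ-1) : ℚ)
      = 2*(ℓ:ℚ) * (Nat.choose ℓ k : ℚ) * (Nat.choose (2*ℓ-1) ℓ : ℚ) := by
  rw [Nat.cast_choose ℚ (by omega : k ≤ 2*ℓ),
      Nat.cast_choose ℚ (by omega : ℓ-1 ≤ 2*ℓ-k-1),
      Nat.cast_choose ℚ hk,
      Nat.cast_choose ℚ (by omega : ℓ ≤ 2*ℓ-1),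
      show 2*ℓ-k-1 - (ℓ-1) = ℓ-k by omega,
      show 2*ℓ-1-ℓ = ℓ-1 by omega]
  have f1 : ((2*ℓ-k).factorial : ℚ) = ((2*ℓ-k : ℕ):ℚ) * ((2*ℓ-k-1).factorial : ℚ) := by
    exact_mod_cast congrArg (Nat.cast : ℕ → ℚ) (Nat.mul_factorial_pred (by omega)).symm
  have f2 : ((2*ℓ).factorial : ℚ) = ((2*ℓ : ℕ):ℚ) * ((2*ℓ-1).factorial : ℚ) := by
    exact_mod_cast congrArg (Nat.cast : ℕ → ℚ) (Nat.mul_factorial_pred (by omega)).symm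
  rw [f1, f2]
  have n1 : ((2*ℓ-k : ℕ):ℚ) ≠ 0 := by
    have : (0:ℕ) < 2*ℓ-k := by omega
    positivity
  have n2 : ((2*ℓ-k-1).factorial : ℚ) ≠ 0 := by positivity
  have n3 : (k.factorial : ℚ) ≠ 0 := by positivity
  have n4 : ((ℓ-1).factorial : ℚ) ≠ 0 := by positivity
  have n5 : ((ℓ-k).factorial : ℚ) ≠ 0 := by positivity
  have n6 : (ℓ.factorial : ℚ) ≠ 0 := by positivity
  have n7 : ((2*ℓ:ℕ):ℚ) = 2*(ℓ:ℚ) := by push_cast; ring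
  rw [n7]
  field_simp

lemma qident (ℓ k : ℕ) (hl : 1 ≤ ℓ) :
    ∑ m ∈ Finset.Icc 1 ℓ,
        ((m : ℚ) / (ℓ : ℚ)) * (Nat.choose (2 * ℓ) (ℓ - m) : ℚ) * qPoly k (m : ℚ) =
      (Nat.choose ℓ k : ℚ) * (Nat.choose (2 * ℓ - 1) ℓ : ℚ) := by
  by_cases hk : k ≤ ℓ
  · have hA := lemA k 0 ℓ hl (by omega)
    simp only [Nat.sub_zero, Nat.cast_zero, sub_zero] at hA
    have hqf : ∀ m : ℚ, Qf 0 k m = qPoly k m := by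
      intro m; rw [Qf, qPoly]; norm_num
    have hl0 : (ℓ:ℚ) ≠ 0 := by positivity
    have hsum : ∑ m ∈ Finset.Icc 1 ℓ,
        ((m : ℚ) / (ℓ : ℚ)) * (Nat.choose (2 * ℓ) (ℓ - m) : ℚ) * qPoly k (m : ℚ)
        = (1/(2*(ℓ:ℚ))) * ∑ m ∈ Finset.Icc 1 ℓ,
            (2*(m:ℚ)) * (Nat.choose (2*ℓ) (ℓ-m) : ℚ) * Qf 0 k (m:ℚ) := by
      rw [Finset.mul_sum]
      apply Finset.sum_congr rfl
      intro m _
      rw [hqf]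
      field_simp
    rw [hsum]
    have : ∑ m ∈ Finset.Icc 1 ℓ, (2*(m:ℚ)) * (Nat.choose (2*ℓ) (ℓ-m) : ℚ) * Qf 0 k (m:ℚ)
        = (Nat.choose (2*ℓ) k : ℚ) * ((2*ℓ-k : ℕ) : ℚ) * (Nat.choose (2*ℓ-k-1) (ℓ-1) : ℚ) := by
      rw [← hA]
    rw [this, hN ℓ k hl hk]
    field_simp
    try ring
  · push_neg at hk
    have hz : ∀ m ∈ Finset.Icc 1 ℓ,
        ((m : ℚ) / (ℓ : ℚ)) * (Nat.choose (2 * ℓ) (ℓ - m) : ℚ) * qPoly k (m : ℚ) = 0 := by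
      intro m hm
      have hm2 : m ≤ ℓ := (Finset.mem_Icc.mp hm).2
      rw [qPoly, qbinom_nat_zero (by omega : m < k), zero_mul, mul_zero]
    rw [Finset.sum_eq_zero hz, Nat.choose_eq_zero_of_lt hk]
    simp

lemma pident (ℓ : ℕ) (hl : 1 ≤ ℓ) : ∀ k,
    ∑ m ∈ Finset.Icc 1 ℓ,
        ((m : ℚ) / (ℓ : ℚ)) * (Nat.choose (2 * ℓ) (ℓ - m) : ℚ) * pPoly k (m : ℚ) =
      (Nat.choose (ℓ - 1) k : ℚ) * (Nat.choose (2 * ℓ - 1) ℓ : ℚ) := by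
  intro k
  induction k with
  | zero =>
      have h := qident ℓ 0 hl
      have : ∀ m : ℚ, pPoly 0 m = qPoly 0 m := by
        intro m; rw [pPoly, qPoly, qbinom_zero, qbinom_zero, qbinom_zero, qbinom_zero]
      calc ∑ m ∈ Finset.Icc 1 ℓ,
            ((m : ℚ) / (ℓ : ℚ)) * (Nat.choose (2 * ℓ) (ℓ - m) : ℚ) * pPoly 0 (m : ℚ)
          = ∑ m ∈ Finset.Icc 1 ℓ,
            ((m : ℚ) / (ℓ : ℚ)) * (Nat.choose (2 * ℓ) (ℓ - m) : ℚ) * qPoly 0 (m : ℚ) := by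
            apply Finset.sum_congr rfl; intro m _; rw [this]
        _ = (Nat.choose ℓ 0 : ℚ) * (Nat.choose (2 * ℓ - 1) ℓ : ℚ) := h
        _ = (Nat.choose (ℓ - 1) 0 : ℚ) * (Nat.choose (2 * ℓ - 1) ℓ : ℚ) := by simp
  | succ k ih =>
      have hsplit : ∑ m ∈ Finset.Icc 1 ℓ,
            ((m : ℚ) / (ℓ : ℚ)) * (Nat.choose (2 * ℓ) (ℓ - m) : ℚ) * pPoly (k+1) (m : ℚ)
          = (∑ m ∈ Finset.Icc 1 ℓ,
              ((m : ℚ) / (ℓ : ℚ)) * (Nat.choose (2 * ℓ) (ℓ - m) : ℚ) * qPoly (k+1) (m : ℚ))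
            - ∑ m ∈ Finset.Icc 1 ℓ,
              ((m : ℚ) / (ℓ : ℚ)) * (Nat.choose (2 * ℓ) (ℓ - m) : ℚ) * pPoly k (m : ℚ) := by
        rw [← Finset.sum_sub_distrib]
        apply Finset.sum_congr rfl
        intro m _
        rw [pq_rel k (m:ℚ)]
        ring
      rw [hsplit, qident ℓ (k+1) hl, ih]
      have hch : Nat.choose ℓ (k+1) = Nat.choose (ℓ-1) k + Nat.choose (ℓ-1) (k+1) := by
        have h2 := Nat.choose_succ_succ (ℓ-1) k
        simp only [Nat.succ_eq_add_one] at h2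
        rw [show ℓ-1+1 = ℓ by omega] at h2
        exact h2
      rw [hch]
      push_cast
      ring

/-- Lemma 3.1 (hypergeometric identities):
`Σ_{m=1}^{ℓ} (m/ℓ)·C(2ℓ,ℓ-m)·p_k(m) = C(ℓ-1,k)·C(2ℓ-1,ℓ)` and
`Σ_{m=1}^{ℓ} (m/ℓ)·C(2ℓ,ℓ-m)·q_k(m) = C(ℓ,k)·C(2ℓ-1,ℓ)`. -/
theorem stmt6 (ℓ k : ℕ) (hl : 1 ≤ ℓ) :
    (∑ m ∈ Finset.Icc 1 ℓ,
        ((m : ℚ) / (ℓ : ℚ)) * (Nat.choose (2 * ℓ) (ℓ - m) : ℚ) * pPoly k (m : ℚ) =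
      (Nat.choose (ℓ - 1) k : ℚ) * (Nat.choose (2 * ℓ - 1) ℓ : ℚ)) ∧
    (∑ m ∈ Finset.Icc 1 ℓ,
        ((m : ℚ) / (ℓ : ℚ)) * (Nat.choose (2 * ℓ) (ℓ - m) : ℚ) * qPoly k (m : ℚ) =
      (Nat.choose ℓ k : ℚ) * (Nat.choose (2 * ℓ - 1) ℓ : ℚ)) := by
  exact ⟨pident ℓ hl k, qident ℓ k hl⟩
end

section
/- (Relations for the quasi-polynomials π.) For all r, s ∈ ℕ, every ε ∈ ℤ and every half-integer m (2m ∈ ℤ), with the conventions π^{(·)}_{−1,·} = π^{(·)}_{·,−1} := 0: (i) s·π^{(ε)}_{r,s}(m) = (r+1)·π^{(ε+1)}_{r+1,s−1}(m); (ii) π^{(1)}_{r,s}(m) = π^{(−1)}_{r,s}(m) + π^{(−1)}_{r−1,s}(m); (iii) s·π^{(1)}_{r,s}(m) = (r+1)·π^{(0)}_{r+1,s−1}(m) + r·π^{(0)}_{r,s−1}(m). -/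
/-- `p_{k,e}(m) = binom(m+e/2-1,k)·binom(m-e/2+k,k)`. -/
def pke (k : ℕ) (e : ℤ) (m : ℚ) : ℚ :=
  qbinom (m + (e : ℚ) / 2 - 1) k * qbinom (m - (e : ℚ) / 2 + k) k

open Classical in
/-- `π^{(ε)}_{r,s}(m) = C(r+s,s)·p_{r+s,s+1+ε}(m)` if `m-(s+1+ε)/2 ∈ ℤ`, and `0` otherwise. -/
noncomputable def piQ (r s : ℕ) (ε : ℤ) (m : ℚ) : ℚ :=
  if ∃ z : ℤ, m - ((s : ℚ) + 1 + (ε : ℚ)) / 2 = (z : ℚ) then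
    (Nat.choose (r + s) s : ℚ) * pke (r + s) ((s : ℤ) + 1 + ε) m
  else 0

lemma absorb (x : ℚ) (k : ℕ) :
    ((k : ℚ) + 1) * qbinom x (k + 1) = (x - k) * qbinom x k := by
  unfold qbinom
  rw [Finset.prod_range_succ, Nat.factorial_succ]
  push_cast
  field_simp

lemma absorb' (x : ℚ) (k : ℕ) :
    ((k : ℚ) + 1) * qbinom x (k + 1) = x * qbinom (x - 1) k := by
  unfold qbinom
  rw [Finset.prod_range_succ', Nat.factorial_succ]
  have h : (∏ i ∈ Finset.range k, (x - ((i : ℚ) + 1))) =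
      ∏ i ∈ Finset.range k, (x - 1 - (i : ℚ)) := by
    apply Finset.prod_congr rfl
    intro i _
    ring
  push_cast
  rw [h]
  field_simp
  ring

lemma pascal (x : ℚ) (k : ℕ) :
    qbinom x (k + 1) = qbinom (x - 1) (k + 1) + qbinom (x - 1) k := by
  have hk : ((k : ℚ) + 1) ≠ 0 := by positivity
  apply mul_left_cancel₀ hk
  rw [mul_add, absorb' x k, absorb (x - 1) k]
  ring

lemma star' (n : ℕ) (e x y : ℚ) (hxy : y - x = (n : ℚ) + 1 - e) :
    ((n : ℚ) + 1) * (qbinom x (n + 1) * qbinom (y - 1) (n + 1)) =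
    ((n : ℚ) + 1) * (qbinom (x - 1) (n + 1) * qbinom y (n + 1)) +
      ((n : ℚ) + 1 - e) * (qbinom (x - 1) n * qbinom (y - 1) n) := by
  have hpx := pascal x n
  have hpy := pascal y n
  have hax := absorb (x - 1) n
  have hay := absorb (y - 1) n
  linear_combination ((n : ℚ) + 1) * qbinom (y - 1) (n + 1) * hpx -
    ((n : ℚ) + 1) * qbinom (x - 1) (n + 1) * hpy +
    qbinom (x - 1) n * hay - qbinom (y - 1) n * hax +
    qbinom (x - 1) n * qbinom (y - 1) n * hxy

lemma star (n : ℕ) (e : ℤ) (m : ℚ) :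
    ((n : ℚ) + 1) * pke (n + 1) (e + 2) m =
    ((n : ℚ) + 1) * pke (n + 1) e m + (((n : ℚ) + 1) - e) * pke n e m := by
  have h := star' n (e : ℚ) (m + (e : ℚ) / 2) (m - (e : ℚ) / 2 + n + 1) (by ring)
  unfold pke
  push_cast
  ring_nf
  ring_nf at h
  linear_combination h

lemma piQ_char (r s : ℕ) (ε : ℤ) (m : ℚ) (w : ℤ) (hw : 2 * m = (w : ℚ)) :
    piQ r s ε m =
      if (w - s - 1 - ε) % 2 = 0 then
        (Nat.choose (r + s) s : ℚ) * pke (r + s) ((s : ℤ) + 1 + ε) m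
      else 0 := by
  have hiff : (∃ z : ℤ, m - ((s : ℚ) + 1 + (ε : ℚ)) / 2 = (z : ℚ)) ↔ (w - s - 1 - ε) % 2 = 0 := by
    constructor
    · rintro ⟨z, hz⟩
      have hwz : (w : ℚ) = ((2 * z + s + 1 + ε : ℤ) : ℚ) := by push_cast; linarith
      have : w = 2 * z + s + 1 + ε := by exact_mod_cast hwz
      omega
    · intro h
      obtain ⟨k, hk⟩ : ∃ k : ℤ, w - s - 1 - ε = 2 * k := ⟨(w - s - 1 - ε) / 2, by omega⟩
      refine ⟨k, ?_⟩
      have : ((w : ℤ) : ℚ) - s - 1 - ε = 2 * k := by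
        exact_mod_cast congrArg (fun t : ℤ => (t : ℚ)) hk
      push_cast at this ⊢
      linarith
  by_cases h : (w - s - 1 - ε) % 2 = 0
  · rw [if_pos h, piQ, if_pos (hiff.mpr h)]
  · rw [if_neg h, piQ, if_neg (fun hc => h (hiff.mp hc))]

lemma chooseQ1 (r s : ℕ) :
    ((s : ℚ) + 1) * ((r + s + 1).choose (s + 1)) = ((r : ℚ) + 1) * ((r + s + 1).choose s) := by
  have h1 : (r + s + 1) * (r + s).choose s = (r + s + 1).choose (s + 1) * (s + 1) :=
    Nat.add_one_mul_choose_eq (r + s) s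
  have h2 : (r + s).choose s * (r + s + 1) = (r + s + 1).choose s * (r + 1) := by
    rw [Nat.choose_mul_succ_eq]; congr 1; omega
  have h1' : ((r : ℚ) + s + 1) * ((r + s).choose s) = ((r + s + 1).choose (s + 1)) * ((s : ℚ) + 1) := by
    exact_mod_cast h1
  have h2' : ((r + s).choose s : ℚ) * ((r : ℚ) + s + 1) = ((r + s + 1).choose s) * ((r : ℚ) + 1) := by
    exact_mod_cast h2
  linear_combination h2' - h1'

lemma chooseQ2 (r s : ℕ) :
    ((s : ℚ) + 1) * ((r + s + 1).choose (s + 1)) = ((r : ℚ) + s + 1) * ((r + s).choose s) := by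
  have h1 : (r + s + 1) * (r + s).choose s = (r + s + 1).choose (s + 1) * (s + 1) :=
    Nat.add_one_mul_choose_eq (r + s) s
  have h1' : ((r : ℚ) + s + 1) * ((r + s).choose s) = ((r + s + 1).choose (s + 1)) * ((s : ℚ) + 1) := by
    exact_mod_cast h1
  linear_combination -h1'

lemma chooseQ3 (r s : ℕ) :
    ((r : ℚ) + 1) * ((r + s + 1).choose s) = ((r : ℚ) + s + 1) * ((r + s).choose s) := by
  have h2 : (r + s).choose s * (r + s + 1) = (r + s + 1).choose s * (r + 1) := by
    rw [Nat.choose_mul_succ_eq]; congr 1; omega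
  have h2' : ((r + s).choose s : ℚ) * ((r : ℚ) + s + 1) = ((r + s + 1).choose s) * ((r : ℚ) + 1) := by
    exact_mod_cast h2
  linear_combination -h2'

lemma pke_flip (k : ℕ) (m : ℚ) : pke k ((k : ℤ) + 2) m = pke k (k : ℤ) m := by
  unfold pke
  rw [mul_comm]
  congr 2 <;> push_cast <;> ring

/-- Relations for the quasi-polynomials `π`:
(i)  `s·π^{(ε)}_{r,s}(m) = (r+1)·π^{(ε+1)}_{r+1,s-1}(m)`,
(ii) `π^{(1)}_{r,s}(m) = π^{(-1)}_{r,s}(m) + π^{(-1)}_{r-1,s}(m)`,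
(iii) `s·π^{(1)}_{r,s}(m) = (r+1)·π^{(0)}_{r+1,s-1}(m) + r·π^{(0)}_{r,s-1}(m)`,
with the conventions `π_{-1,·} = π_{·,-1} := 0`. -/
theorem stmt12 (r s : ℕ) (ε : ℤ) (m : ℚ) (hm : ∃ z : ℤ, 2 * m = (z : ℚ)) :
    ((s : ℚ) * piQ r s ε m =
      (if s = 0 then 0 else ((r : ℚ) + 1) * piQ (r + 1) (s - 1) (ε + 1) m)) ∧
    (piQ r s 1 m = piQ r s (-1) m + (if r = 0 then 0 else piQ (r - 1) s (-1) m)) ∧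
    ((s : ℚ) * piQ r s 1 m =
      (if s = 0 then 0
       else ((r : ℚ) + 1) * piQ (r + 1) (s - 1) 0 m + (r : ℚ) * piQ r (s - 1) 0 m)) := by
  obtain ⟨w, hw⟩ := hm
  refine ⟨?_, ?_, ?_⟩
  · -- part (i)
    rcases s with _ | s
    · simp
    · rw [if_neg (by omega : ¬(s + 1 = 0))]
      simp only [Nat.add_sub_cancel]
      rw [piQ_char r (s + 1) ε m w hw, piQ_char (r + 1) s (ε + 1) m w hw]
      by_cases h : (w - (s : ℤ) - 2 - ε) % 2 = 0
      · rw [if_pos (show (w - ((s + 1 : ℕ) : ℤ) - 1 - ε) % 2 = 0 by push_cast; omega),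
          if_pos (show (w - (s : ℤ) - 1 - (ε + 1)) % 2 = 0 by omega)]
        have hk : r + (s + 1) = r + s + 1 := by omega
        have hk' : r + 1 + s = r + s + 1 := by omega
        have he : ((s + 1 : ℕ) : ℤ) + 1 + ε = (s : ℤ) + 1 + (ε + 1) := by push_cast; ring
        rw [hk, hk', he]
        push_cast
        linear_combination (pke (r + s + 1) ((s : ℤ) + 1 + (ε + 1)) m) * chooseQ1 r s
      · rw [if_neg (show ¬((w - ((s + 1 : ℕ) : ℤ) - 1 - ε) % 2 = 0) by push_cast; omega),
          if_neg (show ¬((w - (s : ℤ) - 1 - (ε + 1)) % 2 = 0) by omega)]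
        ring
  · -- part (ii)
    rcases r with _ | r
    · rw [if_pos rfl, add_zero, piQ_char 0 s 1 m w hw, piQ_char 0 s (-1) m w hw]
      by_cases h : (w - (s : ℤ) - 1 - 1) % 2 = 0
      · rw [if_pos h, if_pos (show (w - (s : ℤ) - 1 - (-1)) % 2 = 0 by omega)]
        rw [show (0 : ℕ) + s = s from by omega,
          show (s : ℤ) + 1 + 1 = (s : ℤ) + 2 from by ring,
          show (s : ℤ) + 1 + (-1) = (s : ℤ) from by ring, pke_flip]
      · rw [if_neg h, if_neg (show ¬((w - (s : ℤ) - 1 - (-1)) % 2 = 0) by omega)]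
    · rw [if_neg (by omega : ¬(r + 1 = 0))]
      simp only [Nat.add_sub_cancel]
      rw [piQ_char (r + 1) s 1 m w hw, piQ_char (r + 1) s (-1) m w hw,
        piQ_char r s (-1) m w hw]
      by_cases h : (w - (s : ℤ) - 2) % 2 = 0
      · rw [if_pos (show (w - (s : ℤ) - 1 - 1) % 2 = 0 by omega),
          if_pos (show (w - (s : ℤ) - 1 - (-1)) % 2 = 0 by omega),
          if_pos (show (w - (s : ℤ) - 1 - (-1)) % 2 = 0 by omega)]
        have hk : r + 1 + s = r + s + 1 := by omega
        rw [hk, show (s : ℤ) + 1 + 1 = (s : ℤ) + 2 from by ring,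
          show (s : ℤ) + 1 + (-1) = (s : ℤ) from by ring]
        have hst := star (r + s) (s : ℤ) m
        have hc := chooseQ3 r s
        have hN : ((r : ℚ) + s + 1) ≠ 0 := by positivity
        apply mul_left_cancel₀ hN
        push_cast at hst ⊢
        linear_combination ((r + s + 1).choose s : ℚ) * hst + (pke (r + s) (s : ℤ) m) * hc
      · rw [if_neg (show ¬((w - (s : ℤ) - 1 - 1) % 2 = 0) by omega),
          if_neg (show ¬((w - (s : ℤ) - 1 - (-1)) % 2 = 0) by omega),
          if_neg (show ¬((w - (s : ℤ) - 1 - (-1)) % 2 = 0) by omega)]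
        ring
  · -- part (iii)
    rcases s with _ | s
    · simp
    · rw [if_neg (by omega : ¬(s + 1 = 0))]
      simp only [Nat.add_sub_cancel]
      rw [piQ_char r (s + 1) 1 m w hw, piQ_char (r + 1) s 0 m w hw, piQ_char r s 0 m w hw]
      by_cases h : (w - (s : ℤ) - 1) % 2 = 0
      · rw [if_pos (show (w - ((s + 1 : ℕ) : ℤ) - 1 - 1) % 2 = 0 by push_cast; omega),
          if_pos (show (w - (s : ℤ) - 1 - 0) % 2 = 0 by omega),
          if_pos (show (w - (s : ℤ) - 1 - 0) % 2 = 0 by omega)]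
        have hk : r + (s + 1) = r + s + 1 := by omega
        have hk' : r + 1 + s = r + s + 1 := by omega
        have he : ((s + 1 : ℕ) : ℤ) + 1 + 1 = (s : ℤ) + 1 + 2 := by push_cast; ring
        have he' : (s : ℤ) + 1 + 0 = (s : ℤ) + 1 := by ring
        rw [hk, hk', he, he']
        have hst := star (r + s) ((s : ℤ) + 1) m
        have hc1 := chooseQ1 r s
        have hc2 := chooseQ2 r s
        have hN : ((r : ℚ) + s + 1) ≠ 0 := by positivity
        apply mul_left_cancel₀ hN
        push_cast at hst ⊢
        linear_combination ((s : ℚ) + 1) * ((r + s + 1).choose (s + 1) : ℚ) * hst +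
          ((r : ℚ) + s + 1) * (pke (r + s + 1) ((s : ℤ) + 1) m) * hc1 +
          (r : ℚ) * (pke (r + s) ((s : ℤ) + 1) m) * hc2
      · rw [if_neg (show ¬((w - ((s + 1 : ℕ) : ℤ) - 1 - 1) % 2 = 0) by push_cast; omega),
          if_neg (show ¬((w - (s : ℤ) - 1 - 0) % 2 = 0) by omega),
          if_neg (show ¬((w - (s : ℤ) - 1 - 0) % 2 = 0) by omega)]
        ring
end
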